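/- Let p : (0,∞) → ℝ be continuously differentiable with p'(ρ) > 0 for all ρ > 0 and c(ρ) = √(p'(ρ)). Assume there exist η ∈ (0,1) and a ∈ (0,∞) such that ρ^η·c(ρ) → a as ρ → 0⁺. Then for every ρ_l > 0, the quantity ∫_ρ^{ρ_l} c(s)/s ds − c(ρ) − c(ρ_l) tends to +∞ as ρ → 0⁺; in particular liminf_{ρ→0⁺} ( ∫_ρ^{ρ_l} c(s)/s ds − c(ρ) − c(ρ_l) ) ≥ 0. -/

import Mathlib

open Filter Topology Set MeasureTheory intervalIntegral

/-- For `p ∈ C¹((0,∞))` with `p' > 0`, `c = √p'`, if there are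
`η ∈ (0,1)` and `a ∈ (0,∞)` with `ρ^η c(ρ) → a` as `ρ → 0⁺`, then for every
`ρ_l > 0` the quantity `∫_ρ^{ρ_l} c(s)/s ds − c(ρ) − c(ρ_l)` tends to `+∞`
as `ρ → 0⁺`; in particular its liminf at `0⁺` is nonnegative. -/
theorem stmt16 (p p' : ℝ → ℝ)
    (hp' : ∀ ρ > (0 : ℝ), HasDerivAt p (p' ρ) ρ)
    (hp'cont : ContinuousOn p' (Set.Ioi 0))
    (hppos : ∀ ρ > (0 : ℝ), 0 < p' ρ)
    (hlim : ∃ η a : ℝ, 0 < η ∧ η < 1 ∧ 0 < a ∧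
      Tendsto (fun ρ => ρ ^ η * Real.sqrt (p' ρ)) (𝓝[>] (0 : ℝ)) (𝓝 a)) :
    ∀ ρl > (0 : ℝ),
      Tendsto
        (fun ρ => (∫ s in ρ..ρl, Real.sqrt (p' s) / s) -
          Real.sqrt (p' ρ) - Real.sqrt (p' ρl)) (𝓝[>] (0 : ℝ)) atTop ∧
      0 ≤ Filter.liminf
        (fun ρ => (∫ s in ρ..ρl, Real.sqrt (p' s) / s) -
          Real.sqrt (p' ρ) - Real.sqrt (p' ρl)) (𝓝[>] (0 : ℝ)) := by
  obtain ⟨η, a, hη, hη1, ha, hlima⟩ := hlim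
  set c : ℝ → ℝ := fun s => Real.sqrt (p' s) with hcdef
  have hccont : ContinuousOn c (Set.Ioi 0) := hp'cont.sqrt
  have hcpos : ∀ s > (0 : ℝ), 0 < c s := fun s hs => Real.sqrt_pos.2 (hppos s hs)
  have hgcont : ContinuousOn (fun s => c s / s) (Set.Ioi 0) :=
    hccont.div continuousOn_id (fun s hs => ne_of_gt hs)
  have hIg : ∀ x y : ℝ, 0 < x → 0 < y →
      IntervalIntegrable (fun s => c s / s) MeasureTheory.volume x y := by
    intro x y hx hy
    apply (hgcont.mono ?_).intervalIntegrable
    intro s hs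
    exact lt_of_lt_of_le (lt_min hx hy) hs.1
  intro ρl hρl
  set ε : ℝ := a * (1 - η) / (2 * (1 + η)) with hεdef
  have hεpos : 0 < ε := by
    apply div_pos (mul_pos ha (by linarith)) (by linarith)
  have hεa : ε < a := by
    rw [hεdef, div_lt_iff₀ (by linarith : (0:ℝ) < 2 * (1 + η))]
    nlinarith
  have hK : 0 < (a - ε) / η - (a + ε) := by
    rw [sub_pos, lt_div_iff₀ hη]
    rw [hεdef]
    rw [div_eq_iff (by linarith : (2:ℝ) * (1 + η) ≠ 0)] at hεdef
    nlinarith [hεdef]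
  -- extract δ0
  have hev : {ρ : ℝ | ρ ^ η * c ρ ∈ Set.Ioo (a - ε) (a + ε)} ∈ 𝓝[>] (0 : ℝ) :=
    hlima (Ioo_mem_nhds (by linarith) (by linarith))
  obtain ⟨δ0, hδ0, hsub⟩ := mem_nhdsGT_iff_exists_Ioo_subset.1 hev
  have hδ0' : δ0 ∈ Set.Ioi (0:ℝ) := hδ0
  set δ : ℝ := min (δ0 / 2) ρl with hδdef
  have hδpos : 0 < δ := lt_min (by simpa using half_pos (Set.mem_Ioi.1 hδ0')) hρl
  have hδρl : δ ≤ ρl := min_le_right _ _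
  have hδlt : δ < δ0 := lt_of_le_of_lt (min_le_left _ _) (half_lt_self (Set.mem_Ioi.1 hδ0'))
  have hbound : ∀ s ∈ Set.Ioc (0:ℝ) δ,
      a - ε < s ^ η * c s ∧ s ^ η * c s < a + ε := by
    intro s hs
    exact hsub ⟨hs.1, lt_of_le_of_lt hs.2 hδlt⟩
  have hlow : ∀ s ∈ Set.Ioc (0:ℝ) δ, (a - ε) * s ^ (-η - 1) ≤ c s / s := by
    intro s hs
    have hspos : 0 < s := hs.1
    have h1 : s ^ (-η - 1) * s ^ η = s⁻¹ := by
      rw [← Real.rpow_add hspos, show -η - 1 + η = -1 by ring]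
      exact Real.rpow_neg_one s
    have h2 : c s / s = s ^ (-η - 1) * (s ^ η * c s) := by
      rw [← mul_assoc, h1, div_eq_inv_mul]
    rw [h2, mul_comm (a - ε)]
    exact mul_le_mul_of_nonneg_left (hbound s hs).1.le
      (Real.rpow_nonneg hspos.le _)
  have hup : ∀ ρ ∈ Set.Ioc (0:ℝ) δ, c ρ ≤ (a + ε) * ρ ^ (-η) := by
    intro ρ hρ
    have hρpos : 0 < ρ := hρ.1
    have h1 : ρ ^ (-η) * ρ ^ η = 1 := by
      rw [← Real.rpow_add hρpos]; norm_num
    have h2 : c ρ = ρ ^ (-η) * (ρ ^ η * c ρ) := by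
      rw [← mul_assoc, h1, one_mul]
    rw [h2, mul_comm ((a+ε)) _]
    exact mul_le_mul_of_nonneg_left (hbound ρ hρ).2.le (Real.rpow_nonneg hρpos.le _)
  set K : ℝ := (a - ε) / η - (a + ε) with hKdef
  set C : ℝ := (∫ s in δ..ρl, c s / s) - (a - ε) / η * δ ^ (-η) - c ρl with hCdef
  have key : ∀ ρ ∈ Set.Ioo (0:ℝ) δ,
      K * ρ ^ (-η) + C ≤ (∫ s in ρ..ρl, c s / s) - c ρ - c ρl := by
    intro ρ hρ
    have hρpos : 0 < ρ := hρ.1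
    have hρδ : ρ ≤ δ := hρ.2.le
    have hIpow : IntervalIntegrable (fun s => (a - ε) * s ^ (-η - 1))
        MeasureTheory.volume ρ δ := by
      apply ContinuousOn.intervalIntegrable
      exact continuousOn_const.mul (ContinuousOn.rpow_const continuousOn_id
          (fun x hx => Or.inl (ne_of_gt (lt_of_lt_of_le (lt_min hρpos hδpos) hx.1))))
    have hsplit : (∫ s in ρ..ρl, c s / s) =
        (∫ s in ρ..δ, c s / s) + ∫ s in δ..ρl, c s / s :=
      (integral_add_adjacent_intervals (hIg ρ δ hρpos hδpos)
        (hIg δ ρl hδpos hρl)).symm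
    have hmono : (∫ s in ρ..δ, (a - ε) * s ^ (-η - 1)) ≤ ∫ s in ρ..δ, c s / s := by
      apply integral_mono_on hρδ hIpow (hIg ρ δ hρpos hδpos)
      intro s hs
      exact hlow s ⟨lt_of_lt_of_le hρpos hs.1, hs.2⟩
    have hcomp : (∫ s in ρ..δ, (a - ε) * s ^ (-η - 1)) =
        (a - ε) / η * (ρ ^ (-η) - δ ^ (-η)) := by
      have gen : ∀ x y z w : ℝ, w ≠ 0 → z * ((x - y) / (-w)) = z / w * (y - x) := by
        intro x y z w hw
        rw [div_neg, mul_neg, div_mul_eq_mul_div, mul_div_assoc, ← mul_neg, ← neg_div, neg_sub]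
      rw [intervalIntegral.integral_const_mul, integral_rpow]
      · rw [show -η - 1 + 1 = -η by ring]
        exact gen _ _ _ _ (ne_of_gt hη)
      · refine Or.inr ⟨by intro h; exact hη.ne' (by linarith), ?_⟩
        intro h
        rcases Set.mem_uIcc.1 h with ⟨h1, h2⟩ | ⟨h1, h2⟩ <;> linarith
    have hupρ := hup ρ ⟨hρpos, hρδ⟩
    have : (a - ε) / η * (ρ ^ (-η) - δ ^ (-η)) ≤ ∫ s in ρ..δ, c s / s := by
      rw [← hcomp]; exact hmono
    rw [hsplit, hKdef, hCdef]
    have expand : ((a - ε) / η - (a + ε)) * ρ ^ (-η) +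
        ((∫ s in δ..ρl, c s / s) - (a - ε) / η * δ ^ (-η) - c ρl) =
        ((a - ε) / η * (ρ ^ (-η) - δ ^ (-η)) + (∫ s in δ..ρl, c s / s))
          - (a + ε) * ρ ^ (-η) - c ρl := by ring
    rw [expand]
    have := hup ρ ⟨hρpos, hρδ⟩
    linarith
  have hρη : Tendsto (fun ρ : ℝ => ρ ^ (-η)) (𝓝[>] (0:ℝ)) atTop := by
    have h1 : Tendsto (fun ρ : ℝ => (ρ⁻¹) ^ η) (𝓝[>] (0:ℝ)) atTop :=
      (tendsto_rpow_atTop hη).comp tendsto_inv_nhdsGT_zero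
    refine h1.congr' ?_
    filter_upwards [self_mem_nhdsWithin] with ρ hρ
    rw [Real.inv_rpow (le_of_lt hρ), ← Real.rpow_neg (le_of_lt hρ)]
  have hg : Tendsto (fun ρ : ℝ => K * ρ ^ (-η) + C) (𝓝[>] (0:ℝ)) atTop :=
    tendsto_atTop_add_const_right _ C (hρη.const_mul_atTop hK)
  have htend : Tendsto
      (fun ρ => (∫ s in ρ..ρl, c s / s) - c ρ - c ρl) (𝓝[>] (0:ℝ)) atTop := by
    apply tendsto_atTop_mono' _ _ hg
    filter_upwards [Ioo_mem_nhdsGT_of_mem (Set.left_mem_Ico.2 hδpos)] with ρ hρ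
    exact key ρ hρ
  refine ⟨htend, ?_⟩
  have huniv : {x : ℝ | ∀ᶠ ρ in 𝓝[>](0:ℝ),
      x ≤ (∫ s in ρ..ρl, c s / s) - c ρ - c ρl} = Set.univ :=
    Set.eq_univ_of_forall fun x => htend.eventually_ge_atTop x
  rw [Filter.liminf_eq]
  rw [show { a_1 | ∀ᶠ n in 𝓝[>](0:ℝ),
      a_1 ≤ (∫ s in n..ρl, c s / s) - c n - c ρl } = Set.univ from huniv,
    Real.sSup_univ]
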